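/- Fix an integer k ≥ 1, data a₁,…,a_k ∈ (0,∞), z₁,…,z_k ∈ {0,1}, and fix β > 0. Let |z| = Σ_{i=1}^{k} z_i. Then as α → ∞, ℓ_k(z|a,(α,β)) = O( (log α)^{-|z|} · exp( -(1/(2β²)) Σ_{i=1}^{k} z_i(log a_i - log α)² ) ). -/

import Mathlib

open MeasureTheory Real Filter Set

/-- The standard Gaussian cumulative distribution function. -/
noncomputable def Phi (x : ℝ) : ℝ :=
  (Real.sqrt (2 * Real.pi))⁻¹ * ∫ t in Set.Iic x, Real.exp (-t ^ 2 / 2)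

/-- The likelihood of the log-normal (probit) fragility model. -/
noncomputable def lik (k : ℕ) (a : Fin k → ℝ) (z : Fin k → ℕ) (α β : ℝ) : ℝ :=
  ∏ i, Phi (Real.log (a i / α) / β) ^ (z i) *
    (1 - Phi (Real.log (a i / α) / β)) ^ (1 - z i)

lemma gauss_eq (t : ℝ) : Real.exp (-t ^ 2 / 2) = Real.exp (-(1/2) * t ^ 2) := by
  congr 1; ring

lemma gauss_integrable : Integrable (fun t : ℝ => Real.exp (-t ^ 2 / 2)) := by
  have h := integrable_exp_neg_mul_sq (by norm_num : (0:ℝ) < 1/2)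
  have eq : (fun t : ℝ => Real.exp (-t ^ 2 / 2)) = fun t : ℝ => Real.exp (-(1/2) * t ^ 2) := by
    funext t; exact gauss_eq t
  rw [eq]; exact h

lemma gauss_mul_integrable : Integrable (fun t : ℝ => t * Real.exp (-t ^ 2 / 2)) := by
  have h := integrable_mul_exp_neg_mul_sq (by norm_num : (0:ℝ) < 1/2)
  have eq : (fun t : ℝ => t * Real.exp (-t ^ 2 / 2))
      = fun t : ℝ => t * Real.exp (-(1/2) * t ^ 2) := by
    funext t; rw [gauss_eq]
  rw [eq]; exact h

lemma gauss_tendsto : Tendsto (fun t : ℝ => -Real.exp (-t ^ 2 / 2)) atBot (nhds 0) := by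
  have h2 : Tendsto (fun t : ℝ => t ^ 2) atBot atTop := by
    have h0 : Tendsto (fun t : ℝ => t ^ 2) atTop atTop :=
      tendsto_pow_atTop (by norm_num)
    have hn : Tendsto (fun t : ℝ => -t) atBot atTop := tendsto_neg_atBot_atTop
    have := h0.comp hn
    refine this.congr fun t => ?_
    simp [Function.comp, neg_pow]
  have h3 : Tendsto (fun t : ℝ => -t ^ 2 / 2) atBot atBot := by
    have h4 := (h2.atTop_div_const (by norm_num : (0:ℝ) < 2))
    refine (tendsto_neg_atTop_atBot.comp h4).congr fun t => ?_
    simp [Function.comp, neg_div]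
  have := (Real.tendsto_exp_atBot.comp h3).neg
  simpa [Function.comp] using this

lemma gauss_primitive (x : ℝ) :
    ∫ t in Set.Iic x, t * Real.exp (-t ^ 2 / 2) = -Real.exp (-x ^ 2 / 2) := by
  have hderiv : ∀ t ∈ Set.Iic x, HasDerivAt (fun s : ℝ => -Real.exp (-s ^ 2 / 2))
      (t * Real.exp (-t ^ 2 / 2)) t := by
    intro t _
    have h1 : HasDerivAt (fun s : ℝ => -s ^ 2 / 2) (-t) t := by
      have := ((hasDerivAt_pow 2 t).neg).div_const 2
      simpa using this.congr_deriv (by ring)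
    have := (h1.exp).neg
    exact this.congr_deriv (by ring)
  have := integral_Iic_of_hasDerivAt_of_tendsto' hderiv
    gauss_mul_integrable.integrableOn gauss_tendsto
  simpa using this

lemma Phi_nonneg (x : ℝ) : 0 ≤ Phi x := by
  apply mul_nonneg (inv_nonneg.2 (Real.sqrt_nonneg _))
  exact integral_nonneg fun t => (Real.exp_pos _).le

lemma Phi_le_one (x : ℝ) : Phi x ≤ 1 := by
  have h1 : ∫ t in Set.Iic x, Real.exp (-t ^ 2 / 2) ≤ ∫ t : ℝ, Real.exp (-t ^ 2 / 2) := by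
    apply setIntegral_le_integral gauss_integrable
    filter_upwards with t using (Real.exp_pos _).le
  have h2 : ∫ t : ℝ, Real.exp (-t ^ 2 / 2) = Real.sqrt (2 * Real.pi) := by
    simp_rw [gauss_eq]
    rw [integral_gaussian]
    congr 1
    rw [div_div_eq_mul_div, div_one]
    ring
  have hs : 0 < Real.sqrt (2 * Real.pi) :=
    Real.sqrt_pos.2 (by positivity)
  rw [Phi]
  calc (Real.sqrt (2 * Real.pi))⁻¹ * ∫ t in Set.Iic x, Real.exp (-t ^ 2 / 2)
      ≤ (Real.sqrt (2 * Real.pi))⁻¹ * Real.sqrt (2 * Real.pi) := by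
        apply mul_le_mul_of_nonneg_left _ (inv_nonneg.2 hs.le)
        rw [← h2]; exact h1
    _ = 1 := inv_mul_cancel₀ hs.ne'

lemma Phi_tail {x : ℝ} (hx : x < 0) :
    Phi x ≤ (Real.sqrt (2 * Real.pi))⁻¹ * (Real.exp (-x ^ 2 / 2) / (-x)) := by
  have hmono : ∫ t in Set.Iic x, Real.exp (-t ^ 2 / 2)
      ≤ ∫ t in Set.Iic x, (t / x) * Real.exp (-t ^ 2 / 2) := by
    apply setIntegral_mono_on gauss_integrable.integrableOn
      ?_ measurableSet_Iic ?_
    · have : (fun t : ℝ => (t / x) * Real.exp (-t ^ 2 / 2))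
          = fun t : ℝ => x⁻¹ * (t * Real.exp (-t ^ 2 / 2)) := by
        funext t; ring
      rw [this]
      exact (gauss_mul_integrable.const_mul _).integrableOn
    · intro t ht
      have h1 : (1 : ℝ) ≤ t / x := by
        rw [le_div_iff_of_neg hx]
        simpa using ht
      nlinarith [Real.exp_pos (-t ^ 2 / 2)]
  have hcomp : ∫ t in Set.Iic x, (t / x) * Real.exp (-t ^ 2 / 2)
      = Real.exp (-x ^ 2 / 2) / (-x) := by
    have : (fun t : ℝ => (t / x) * Real.exp (-t ^ 2 / 2))
        = fun t : ℝ => x⁻¹ * (t * Real.exp (-t ^ 2 / 2)) := by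
      funext t; ring
    rw [this, integral_const_mul, gauss_primitive]
    have hx' : x ≠ 0 := hx.ne
    field_simp
  rw [Phi]
  apply mul_le_mul_of_nonneg_left _ (inv_nonneg.2 (Real.sqrt_nonneg _))
  rw [← hcomp]; exact hmono

/-- Fix `k ≥ 1`, data `aᵢ ∈ (0,∞)`, `zᵢ ∈ {0,1}` and `β > 0`. With `|z| = Σ zᵢ`, as
`α → ∞` one has
`ℓ_k(z|a,(α,β)) = O((log α)^{-|z|} exp(-(1/(2β²)) Σ zᵢ(log aᵢ - log α)²))`. -/
theorem stmt5 (k : ℕ) (hk : 1 ≤ k) (a : Fin k → ℝ) (ha : ∀ i, 0 < a i)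
    (z : Fin k → ℕ) (hz : ∀ i, z i = 0 ∨ z i = 1) (β : ℝ) (hβ : 0 < β) :
    ∃ C > (0 : ℝ), ∃ α₀ : ℝ, ∀ α : ℝ, α₀ < α →
      lik k a z α β ≤ C * Real.log α ^ (-(∑ i, (z i : ℤ))) *
        Real.exp (-(∑ i, (z i : ℝ) * (Real.log (a i) - Real.log α) ^ 2) /
          (2 * β ^ 2)) := by
  set c : ℝ := (Real.sqrt (2 * Real.pi))⁻¹ * (2 * β) with hc
  have hc0 : 0 < c := by
    apply mul_pos (inv_pos.2 (Real.sqrt_pos.2 (by positivity))) (by positivity)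
  refine ⟨(max c 1) ^ k, by positivity, Real.exp (1 + 2 * ∑ i, |Real.log (a i)|), ?_⟩
  intro α hα
  set M : ℝ := 1 + 2 * ∑ i, |Real.log (a i)| with hM
  have hα0 : 0 < α := lt_trans (Real.exp_pos M) hα
  set L : ℝ := Real.log α with hL
  have hML : M < L := by
    rw [hL, ← Real.log_exp M]
    exact Real.log_lt_log (Real.exp_pos M) hα
  have hM1 : 1 ≤ M := by
    have : 0 ≤ ∑ i, |Real.log (a i)| :=
      Finset.sum_nonneg fun i _ => abs_nonneg _
    rw [hM]; linarith
  have hL1 : 1 < L := lt_of_le_of_lt hM1 hML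
  have hL0 : 0 < L := lt_trans one_pos hL1
  have habs : ∀ i, 2 * |Real.log (a i)| + 1 ≤ L := by
    intro i
    have h1 : |Real.log (a i)| ≤ ∑ j, |Real.log (a j)| :=
      Finset.single_le_sum (f := fun j => |Real.log (a j)|)
        (fun j _ => abs_nonneg _) (Finset.mem_univ i)
    rw [hM] at hML; linarith
  -- the key pointwise bound
  have key : ∀ i, Phi (Real.log (a i / α) / β) ^ (z i) *
      (1 - Phi (Real.log (a i / α) / β)) ^ (1 - z i)
      ≤ (c / L * Real.exp (-((Real.log (a i) - L) ^ 2) / (2 * β ^ 2))) ^ (z i) := by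
    intro i
    have hlog : Real.log (a i / α) = Real.log (a i) - L := by
      rw [Real.log_div (ha i).ne' hα0.ne']
    have hgap : Real.log (a i) - L ≤ -(L / 2) := by
      have h1 := habs i
      have h2 : Real.log (a i) ≤ |Real.log (a i)| := le_abs_self _
      linarith
    have hxneg : Real.log (a i / α) / β < 0 := by
      rw [hlog]
      apply div_neg_of_neg_of_pos _ hβ
      linarith
    rcases hz i with h0 | h1
    · rw [h0]
      simp only [pow_zero, one_mul, pow_one]
      have := Phi_nonneg (Real.log (a i / α) / β)
      linarith
    · rw [h1]
      simp only [pow_one, Nat.sub_self, pow_zero, mul_one]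
      calc Phi (Real.log (a i / α) / β)
          ≤ (Real.sqrt (2 * Real.pi))⁻¹ *
            (Real.exp (-(Real.log (a i / α) / β) ^ 2 / 2) / (-(Real.log (a i / α) / β))) :=
            Phi_tail hxneg
        _ ≤ c / L * Real.exp (-((Real.log (a i) - L) ^ 2) / (2 * β ^ 2)) := by
            have hexp : Real.exp (-(Real.log (a i / α) / β) ^ 2 / 2)
                = Real.exp (-((Real.log (a i) - L) ^ 2) / (2 * β ^ 2)) := by
              congr 1
              rw [hlog]
              field_simp
            rw [hexp]
            have hden : L / (2 * β) ≤ -(Real.log (a i / α) / β) := by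
              rw [hlog, ← neg_div, div_le_div_iff₀ (by positivity) hβ]
              ring_nf
              nlinarith
            have hden0 : 0 < L / (2 * β) := by positivity
            have hfrac : Real.exp (-((Real.log (a i) - L) ^ 2) / (2 * β ^ 2)) /
                (-(Real.log (a i / α) / β))
                ≤ Real.exp (-((Real.log (a i) - L) ^ 2) / (2 * β ^ 2)) / (L / (2 * β)) :=
              div_le_div_of_nonneg_left (Real.exp_pos _).le hden0 hden
            calc (Real.sqrt (2 * Real.pi))⁻¹ *
                (Real.exp (-((Real.log (a i) - L) ^ 2) / (2 * β ^ 2)) /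
                  (-(Real.log (a i / α) / β)))
                ≤ (Real.sqrt (2 * Real.pi))⁻¹ *
                  (Real.exp (-((Real.log (a i) - L) ^ 2) / (2 * β ^ 2)) / (L / (2 * β))) :=
                  mul_le_mul_of_nonneg_left hfrac (inv_nonneg.2 (Real.sqrt_nonneg _))
              _ = c / L * Real.exp (-((Real.log (a i) - L) ^ 2) / (2 * β ^ 2)) := by
                  rw [hc]
                  field_simp
  -- product bound
  have hprod : lik k a z α β
      ≤ ∏ i, (c / L * Real.exp (-((Real.log (a i) - L) ^ 2) / (2 * β ^ 2))) ^ (z i) := by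
    rw [lik]
    apply Finset.prod_le_prod
    · intro i _
      apply mul_nonneg (pow_nonneg (Phi_nonneg _) _)
      apply pow_nonneg
      have := Phi_le_one (Real.log (a i / α) / β)
      linarith
    · intro i _
      exact key i
  -- compute the RHS product
  have hS : ∑ i, z i ≤ k := by
    calc ∑ i, z i ≤ ∑ _i : Fin k, 1 := Finset.sum_le_sum fun i _ => by
          rcases hz i with h | h <;> omega
      _ = k := by simp
  have hrhs : ∏ i, (c / L * Real.exp (-((Real.log (a i) - L) ^ 2) / (2 * β ^ 2))) ^ (z i)
      = (c / L) ^ (∑ i, z i) *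
        Real.exp (-(∑ i, (z i : ℝ) * (Real.log (a i) - L) ^ 2) / (2 * β ^ 2)) := by
    simp_rw [mul_pow, Finset.prod_mul_distrib, Finset.prod_pow_eq_pow_sum,
      ← Real.exp_nat_mul, ← Real.exp_sum]
    congr 1
    rw [neg_div, Finset.sum_div, ← Finset.sum_neg_distrib]
    congr 1
    apply Finset.sum_congr rfl
    intro i _
    ring
  rw [hrhs] at hprod
  refine le_trans hprod ?_
  -- compare constants and powers of L
  have hzpow : (L : ℝ) ^ (-(∑ i, (z i : ℤ))) = (L ^ (∑ i, z i))⁻¹ := by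
    have : (∑ i, (z i : ℤ)) = ((∑ i, z i : ℕ) : ℤ) := by
      simp [Nat.cast_sum]
    rw [this, zpow_neg, zpow_natCast]
  rw [hzpow]
  have hcpow : c ^ (∑ i, z i) ≤ (max c 1) ^ k := by
    calc c ^ (∑ i, z i) ≤ (max c 1) ^ (∑ i, z i) :=
          pow_le_pow_left₀ hc0.le (le_max_left c 1) _
      _ ≤ (max c 1) ^ k := pow_le_pow_right₀ (le_max_right c 1) hS
  have hLpow : 0 < L ^ (∑ i, z i) := pow_pos hL0 _
  rw [div_pow, div_eq_mul_inv]
  apply mul_le_mul_of_nonneg_right _ (Real.exp_pos _).le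
  apply mul_le_mul_of_nonneg_right hcpow (inv_nonneg.2 hLpow.le)
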